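/- Let u, v ∈ S be such that there exists an S-mincut A with u ∈ A and v ∉ A. Then there exists a valid cut T of S with u ∈ T and v ∉ T such that (a) T ⊆ T' for every valid cut T' of S with u ∈ T' and v ∉ T' (in particular such a T is unique), and (b) T does not cross any valid cut of S: for every valid cut T'' of S, at least one of the four sets T ∩ T'', T \ T'', T'' \ T, S \ (T ∪ T'') is empty. -/

import Mathlib

open Finset

/-- Capacity of the cut defined by `A`: number of edges with one endpoint in `A`
and the other outside `A`. -/
def cap {V : Type*} [Fintype V] [DecidableEq V] (w : V → V → ℕ) (A : Finset V) : ℕ :=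
  ∑ a ∈ A, ∑ b ∈ Aᶜ, w a b

/-- A cut of `V` is a subset `A` with `∅ ≠ A ≠ V`. -/
def IsCut {V : Type*} [Fintype V] (A : Finset V) : Prop :=
  A ≠ ∅ ∧ A ≠ Finset.univ

/-- An `S`-cut is a cut that divides `S`. -/
def IsSCut {V : Type*} [Fintype V] [DecidableEq V] (S A : Finset V) : Prop :=
  IsCut A ∧ (A ∩ S).Nonempty ∧ (S \ A).Nonempty

/-- An `S`-mincut is an `S`-cut of minimum capacity among all `S`-cuts. -/
def IsSMincut {V : Type*} [Fintype V] [DecidableEq V] (w : V → V → ℕ) (S A : Finset V) : Prop :=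
  IsSCut S A ∧ ∀ B : Finset V, IsSCut S B → cap w A ≤ cap w B

/-- `T ⊆ S` is a valid cut of `S` if some `S`-mincut `A` satisfies `A ∩ S = T`. -/
def IsValidCut {V : Type*} [Fintype V] [DecidableEq V] (w : V → V → ℕ) (S T : Finset V) : Prop :=
  ∃ A : Finset V, IsSMincut w S A ∧ A ∩ S = T

/-- A tight mincut for a valid cut `T` of `S`. -/
def IsTightMincut {V : Type*} [Fintype V] [DecidableEq V] (w : V → V → ℕ)
    (S T N : Finset V) : Prop :=
  IsSMincut w S N ∧ N ∩ S = T ∧ ∀ A : Finset V, IsSMincut w S A → A ∩ S = T → N ⊆ A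

/-- A loose mincut for a valid cut `T` of `S`. -/
def IsLooseMincut {V : Type*} [Fintype V] [DecidableEq V] (w : V → V → ℕ)
    (S T F : Finset V) : Prop :=
  IsSMincut w S F ∧ F ∩ S = T ∧ ∀ A : Finset V, IsSMincut w S A → A ∩ S = T → A ⊆ F

section aux
variable {V : Type*} [Fintype V] [DecidableEq V] (w : V → V → ℕ)

lemma cap_eq (A : Finset V) :
    cap w A = ∑ a : V, ∑ b : V, if a ∈ A ∧ b ∉ A then w a b else 0 := by
  unfold cap
  have h1 : ∀ a : V, (∑ b : V, if a ∈ A ∧ b ∉ A then w a b else 0)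
      = if a ∈ A then ∑ b ∈ Aᶜ, w a b else 0 := by
    intro a
    by_cases ha : a ∈ A
    · simp only [ha, true_and, if_true]
      simp only [← Finset.mem_compl]
      rw [Finset.sum_ite_mem, Finset.univ_inter]
    · simp [ha]
  rw [Finset.sum_congr rfl fun a _ => h1 a, Finset.sum_ite_mem, Finset.univ_inter]

lemma cap_submodular (A B : Finset V) :
    cap w (A ∩ B) + cap w (A ∪ B) ≤ cap w A + cap w B := by
  simp only [cap_eq]
  rw [← Finset.sum_add_distrib, ← Finset.sum_add_distrib]
  refine Finset.sum_le_sum fun a _ => ?_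
  rw [← Finset.sum_add_distrib, ← Finset.sum_add_distrib]
  refine Finset.sum_le_sum fun b _ => ?_
  generalize w a b = x
  by_cases haA : a ∈ A <;> by_cases haB : a ∈ B <;> by_cases hbA : b ∈ A <;> by_cases hbB : b ∈ B <;>
    simp [Finset.mem_inter, Finset.mem_union, haA, haB, hbA, hbB]

lemma cap_compl (hsymm : ∀ u v : V, w u v = w v u) (A : Finset V) : cap w Aᶜ = cap w A := by
  unfold cap
  rw [compl_compl, Finset.sum_comm]
  exact Finset.sum_congr rfl fun a _ => Finset.sum_congr rfl fun b _ => hsymm b a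

lemma cap_posimodular (hsymm : ∀ u v : V, w u v = w v u) (A B : Finset V) :
    cap w (A \ B) + cap w (B \ A) ≤ cap w A + cap w B := by
  have h := cap_submodular w A Bᶜ
  have e1 : A ∩ Bᶜ = A \ B := by ext x; simp [Finset.mem_sdiff, and_comm]
  have e2 : A ∪ Bᶜ = (B \ A)ᶜ := by ext x; simp [Finset.mem_sdiff]; tauto
  rw [e1, e2, cap_compl w hsymm (B \ A), cap_compl w hsymm B] at h
  exact h

lemma isSCut_of {S A : Finset V} (h1 : (A ∩ S).Nonempty) (h2 : (S \ A).Nonempty) :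
    IsSCut S A := by
  refine ⟨⟨?_, ?_⟩, h1, h2⟩
  · obtain ⟨x, hx⟩ := h1
    intro h; rw [h] at hx; simp at hx
  · obtain ⟨x, hx⟩ := h2
    rw [Finset.mem_sdiff] at hx
    intro h; exact hx.2 (h ▸ Finset.mem_univ x)

/-- Two S-cuts obtained from two S-mincuts with total capacity at most twice the minimum
are themselves S-mincuts. -/
lemma mincut_pair {S A B C D : Finset V} (hA : IsSMincut w S A) (hB : IsSMincut w S B)
    (hC : IsSCut S C) (hD : IsSCut S D)
    (hsum : cap w C + cap w D ≤ cap w A + cap w B) :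
    IsSMincut w S C ∧ IsSMincut w S D := by
  have hAB : cap w A = cap w B :=
    le_antisymm (hA.2 B hB.1) (hB.2 A hA.1)
  have hCA : cap w A ≤ cap w C := hA.2 C hC
  have hDA : cap w A ≤ cap w D := hA.2 D hD
  have hC' : cap w C = cap w A := by omega
  have hD' : cap w D = cap w A := by omega
  exact ⟨⟨hC, fun E hE => hC' ▸ hA.2 E hE⟩, ⟨hD, fun E hE => hD' ▸ hA.2 E hE⟩⟩

end aux

/-- For `u, v ∈ S` separated by some `S`-mincut, the tight valid cut of `S` from `u` to `v`
exists, is unique, and is a laminar cut in the family of all valid cuts of `S`. -/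
theorem tight_valid_cut_exists_and_laminar {V : Type*} [Fintype V] [DecidableEq V]
    (w : V → V → ℕ) (hsymm : ∀ u v' : V, w u v' = w v' u) (hloop : ∀ v' : V, w v' v' = 0)
    (S : Finset V) (hS : 2 ≤ S.card)
    (u v : V) (hu : u ∈ S) (hv : v ∈ S)
    (A : Finset V) (hA : IsSMincut w S A) (huA : u ∈ A) (hvA : v ∉ A) :
    ∃ T : Finset V, IsValidCut w S T ∧ u ∈ T ∧ v ∉ T ∧
      (∀ T' : Finset V, IsValidCut w S T' → u ∈ T' → v ∉ T' → T ⊆ T') ∧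
      (∀ T'' : Finset V, IsValidCut w S T'' →
        T ∩ T'' = ∅ ∨ T \ T'' = ∅ ∨ T'' \ T = ∅ ∨ S \ (T ∪ T'') = ∅) ∧
      (∀ T₀ : Finset V, IsValidCut w S T₀ → u ∈ T₀ → v ∉ T₀ →
        (∀ T' : Finset V, IsValidCut w S T' → u ∈ T' → v ∉ T' → T₀ ⊆ T') → T₀ = T) := by
  classical
  -- the family of S-mincuts containing u but not v
  set P : Finset V → Prop := fun B => IsSMincut w S B ∧ u ∈ B ∧ v ∉ B with hP
  -- it is closed under intersections
  have hclosed : ∀ B C : Finset V, P B → P C → P (B ∩ C) := by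
    rintro B C ⟨hB, huB, hvB⟩ ⟨hC, huC, hvC⟩
    have hvBC : v ∉ B ∩ C := by simp [Finset.mem_inter]; tauto
    have hscut1 : IsSCut S (B ∩ C) := by
      refine isSCut_of ⟨u, ?_⟩ ⟨v, ?_⟩ <;> simp [Finset.mem_inter, huB, huC, hu, hv, hvBC]
    have hscut2 : IsSCut S (B ∪ C) := by
      refine isSCut_of ⟨u, ?_⟩ ⟨v, ?_⟩ <;> simp [Finset.mem_union, huB, hu, hv, hvB, hvC]
    obtain ⟨h1, _⟩ := mincut_pair w hB hC hscut1 hscut2 (cap_submodular w B C)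
    exact ⟨h1, Finset.mem_inter.mpr ⟨huB, huC⟩, hvBC⟩
  set F : Finset (Finset V) := univ.filter P with hF
  have hAF : A ∈ F := by simp [hF, hP, hA, huA, hvA]
  have hFne : F.Nonempty := ⟨A, hAF⟩
  set N : Finset V := F.inf' hFne id with hN
  have hNP : P N := by
    refine Finset.inf'_mem (setOf P) ?_ F hFne id ?_
    · intro x hx y hy; exact hclosed x y hx hy
    · intro i hi; exact (Finset.mem_filter.mp hi).2
  obtain ⟨hNmin, huN, hvN⟩ := hNP
  have hNle : ∀ B : Finset V, P B → N ⊆ B := by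
    intro B hB
    exact Finset.inf'_le id (Finset.mem_filter.mpr ⟨Finset.mem_univ _, hB⟩)
  have hvNS : v ∉ N ∩ S := fun h => hvN (Finset.mem_inter.mp h).1
  refine ⟨N ∩ S, ⟨N, hNmin, rfl⟩, Finset.mem_inter.mpr ⟨huN, hu⟩, hvNS, ?_, ?_, ?_⟩
  · -- minimality
    rintro T' ⟨A', hA', rfl⟩ huT' hvT'
    have huA' : u ∈ A' := (Finset.mem_inter.mp huT').1
    have hvA' : v ∉ A' := fun h => hvT' (Finset.mem_inter.mpr ⟨h, hv⟩)
    exact Finset.inter_subset_inter_right (hNle A' ⟨hA', huA', hvA'⟩)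
  · -- laminarity
    rintro T'' ⟨A'', hA'', rfl⟩
    by_contra hcon
    push_neg at hcon
    obtain ⟨h1, h2, h3, h4⟩ := hcon
    obtain ⟨x, hx⟩ := h1
    obtain ⟨x1, hx1⟩ := h2
    obtain ⟨x2, hx2⟩ := h3
    obtain ⟨x3, hx3⟩ := h4
    have hxN : x ∈ N := (Finset.mem_inter.mp (Finset.mem_inter.mp hx).1).1
    have hxA : x ∈ A'' := (Finset.mem_inter.mp (Finset.mem_inter.mp hx).2).1
    have hx1N : x1 ∈ N := (Finset.mem_inter.mp (Finset.mem_sdiff.mp hx1).1).1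
    have hx1S : x1 ∈ S := (Finset.mem_inter.mp (Finset.mem_sdiff.mp hx1).1).2
    have hx1A : x1 ∉ A'' := fun h =>
      (Finset.mem_sdiff.mp hx1).2 (Finset.mem_inter.mpr ⟨h, hx1S⟩)
    have hx2A : x2 ∈ A'' := (Finset.mem_inter.mp (Finset.mem_sdiff.mp hx2).1).1
    have hx2S : x2 ∈ S := (Finset.mem_inter.mp (Finset.mem_sdiff.mp hx2).1).2
    have hx2N : x2 ∉ N := fun h =>
      (Finset.mem_sdiff.mp hx2).2 (Finset.mem_inter.mpr ⟨h, hx2S⟩)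
    have hx3S : x3 ∈ S := (Finset.mem_sdiff.mp hx3).1
    have hx3N : x3 ∉ N := fun h =>
      (Finset.mem_sdiff.mp hx3).2 (Finset.mem_union_left _ (Finset.mem_inter.mpr ⟨h, hx3S⟩))
    have hx3A : x3 ∉ A'' := fun h =>
      (Finset.mem_sdiff.mp hx3).2 (Finset.mem_union_right _ (Finset.mem_inter.mpr ⟨h, hx3S⟩))
    by_cases huA'' : u ∈ A''
    · -- intersect case
      have hscut1 : IsSCut S (N ∩ A'') :=
        isSCut_of ⟨u, Finset.mem_inter.mpr ⟨Finset.mem_inter.mpr ⟨huN, huA''⟩, hu⟩⟩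
          ⟨x2, Finset.mem_sdiff.mpr ⟨hx2S, fun h => hx2N (Finset.mem_inter.mp h).1⟩⟩
      have hscut2 : IsSCut S (N ∪ A'') :=
        isSCut_of ⟨u, Finset.mem_inter.mpr ⟨Finset.mem_union_left _ huN, hu⟩⟩
          ⟨x3, Finset.mem_sdiff.mpr ⟨hx3S, fun h => by
            rcases Finset.mem_union.mp h with h' | h'
            exacts [hx3N h', hx3A h']⟩⟩
      obtain ⟨hm, _⟩ := mincut_pair w hNmin hA'' hscut1 hscut2 (cap_submodular w N A'')
      have hsub : N ⊆ N ∩ A'' := hNle _ ⟨hm, Finset.mem_inter.mpr ⟨huN, huA''⟩,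
        fun h => hvN (Finset.mem_inter.mp h).1⟩
      exact hx1A (Finset.mem_inter.mp (hsub hx1N)).2
    · -- sdiff case
      have hscut1 : IsSCut S (N \ A'') :=
        isSCut_of ⟨u, Finset.mem_inter.mpr ⟨Finset.mem_sdiff.mpr ⟨huN, huA''⟩, hu⟩⟩
          ⟨x2, Finset.mem_sdiff.mpr ⟨hx2S, fun h => hx2N (Finset.mem_sdiff.mp h).1⟩⟩
      have hscut2 : IsSCut S (A'' \ N) :=
        isSCut_of ⟨x2, Finset.mem_inter.mpr ⟨Finset.mem_sdiff.mpr ⟨hx2A, hx2N⟩, hx2S⟩⟩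
          ⟨u, Finset.mem_sdiff.mpr ⟨hu, fun h => (Finset.mem_sdiff.mp h).2 huN⟩⟩
      obtain ⟨hm, _⟩ := mincut_pair w hNmin hA'' hscut1 hscut2 (cap_posimodular w hsymm N A'')
      have hsub : N ⊆ N \ A'' := hNle _ ⟨hm, Finset.mem_sdiff.mpr ⟨huN, huA''⟩,
        fun h => hvN (Finset.mem_sdiff.mp h).1⟩
      exact (Finset.mem_sdiff.mp (hsub hxN)).2 hxA
  · -- uniqueness
    rintro T₀ hT₀ huT₀ hvT₀ hmin₀
    refine Finset.Subset.antisymm (hmin₀ (N ∩ S) ⟨N, hNmin, rfl⟩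
      (Finset.mem_inter.mpr ⟨huN, hu⟩) hvNS) ?_
    obtain ⟨A₀, hA₀, rfl⟩ := hT₀
    have huA₀ : u ∈ A₀ := (Finset.mem_inter.mp huT₀).1
    have hvA₀ : v ∉ A₀ := fun h => hvT₀ (Finset.mem_inter.mpr ⟨h, hv⟩)
    exact Finset.inter_subset_inter_right (hNle A₀ ⟨hA₀, huA₀, hvA₀⟩)
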